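/- Let F be a field of characteristic different from 2 in which −1 is not a square, and let R = F[X] be the polynomial ring over F. If m ∈ F[X] divides z² + t² for some coprime polynomials z, t ∈ F[X], then m is an associate of a polynomial of the form x² + y² where x, y ∈ F[X] are coprime; that is, there exist coprime x, y ∈ F[X] and a unit u such that m = (x² + y²)·u. -/

import Mathlib

open Polynomial

namespace AssocSqAux

variable {F : Type*} [Field F]

theorem two_ne_zero'' (hns : ∀ a : F, a ^ 2 ≠ -1) : (2 : F) ≠ 0 := by
  intro h
  exact hns 1 (by rw [one_pow]; linear_combination h)

theorem irr_q (hns : ∀ a : F, a ^ 2 ≠ -1) : Irreducible (X ^ 2 + 1 : F[X]) := by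
  have hm : (X ^ 2 + 1 : F[X]).Monic := monic_X_pow_add (by
    simpa using (by norm_num : (0:WithBot ℕ) < 2))
  have hnd : (X ^ 2 + 1 : F[X]).natDegree = 2 := by
    simpa using (natDegree_X_pow_add_C (n := 2) (r := (1:F)))
  rw [hm.irreducible_iff_roots_eq_zero_of_degree_le_three (by omega) (by omega)]
  rw [Multiset.eq_zero_iff_forall_notMem]
  intro a ha
  rw [mem_roots (hm.ne_zero)] at ha
  apply hns a
  simp only [IsRoot, eval_add, eval_pow, eval_X, eval_one] at ha
  linear_combination ha

noncomputable abbrev K (F : Type*) [Field F] := AdjoinRoot (X ^ 2 + 1 : F[X])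

noncomputable def im : K F := AdjoinRoot.root _

theorem im_sq : (im : K F) ^ 2 = -1 := by
  have h := AdjoinRoot.eval₂_root (X ^ 2 + 1 : F[X])
  simp only [eval₂_add, eval₂_pow, eval₂_X, eval₂_one] at h
  exact eq_neg_of_add_eq_zero_left h

noncomputable def conj : K F →ₐ[F] K F :=
  AdjoinRoot.liftAlgHom _ (Algebra.ofId F (K F)) (-im) (by
    simp only [eval₂_add, eval₂_pow, eval₂_X, eval₂_one]
    rw [neg_pow, im_sq]; ring)

theorem conj_im : (conj (im : K F)) = -im := by
  simp only [conj, im, AdjoinRoot.liftAlgHom_root]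

theorem conj_conj (k : K F) : conj (conj k) = k := by
  have h : (conj.comp conj : K F →ₐ[F] K F) = AlgHom.id F _ :=
    AdjoinRoot.algHom_ext (by simp [AlgHom.comp_apply, show AdjoinRoot.root (X^2+1 : F[X]) = im from rfl, conj_im])
  exact congrArg (fun f => f k) h

/-- the embedding F[X] → K[X] -/
noncomputable def ph (x : F[X]) : (K F)[X] := x.map (algebraMap F (K F))


theorem ph_add (x y : F[X]) : ph (x + y) = ph x + ph y := Polynomial.map_add _
theorem ph_mul (x y : F[X]) : ph (x * y) = ph x * ph y := Polynomial.map_mul _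
theorem ph_sub (x y : F[X]) : ph (x - y) = ph x - ph y := Polynomial.map_sub _
theorem ph_pow (x : F[X]) (n : ℕ) : ph (x ^ n) = ph x ^ n := by simp [ph]
theorem ph_one : ph (1 : F[X]) = 1 := Polynomial.map_one _
theorem ph_zero : ph (0 : F[X]) = 0 := Polynomial.map_zero _
theorem ph_dvd {x y : F[X]} (h : x ∣ y) : ph x ∣ ph y := Polynomial.map_dvd _ h

theorem exists_re_im (k : K F) :
    ∃ a b : F, k = algebraMap F (K F) a + algebraMap F (K F) b * im := by
  obtain ⟨f, rfl⟩ := AdjoinRoot.mk_surjective k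
  have hm : (X ^ 2 + 1 : F[X]).Monic := monic_X_pow_add (by
    simpa using (by norm_num : (0:WithBot ℕ) < 2))
  set r : F[X] := f %ₘ (X ^ 2 + 1) with hr
  have h1 : r + (X ^ 2 + 1) * (f /ₘ (X ^ 2 + 1)) = f := modByMonic_add_div f _
  have hmk : AdjoinRoot.mk (X ^ 2 + 1 : F[X]) f = AdjoinRoot.mk _ r := by
    rw [← h1, map_add, map_mul, AdjoinRoot.mk_self, zero_mul, add_zero]
  have hdeg : r.degree ≤ 1 := by
    have h2 : r.degree < (X ^ 2 + 1 : F[X]).degree := degree_modByMonic_lt f hm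
    have h3 : (X ^ 2 + 1 : F[X]).degree = 2 := by
      simpa using (degree_X_pow_add_C (by norm_num : 0 < 2) (1:F))
    rw [h3] at h2
    exact Order.le_of_lt_succ (by exact_mod_cast h2)
  have hre : r = C (r.coeff 1) * X + C (r.coeff 0) := eq_X_add_C_of_degree_le_one hdeg
  refine ⟨r.coeff 0, r.coeff 1, ?_⟩
  rw [hmk]
  conv_lhs => rw [hre]
  simp only [map_add, map_mul, AdjoinRoot.mk_C, AdjoinRoot.mk_X]
  rw [AdjoinRoot.algebraMap_eq]
  show _ = AdjoinRoot.of _ _ + AdjoinRoot.of _ _ * AdjoinRoot.root _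
  ring

theorem re_im_eq_zero (hns : ∀ a : F, a ^ 2 ≠ -1) {a b : F}
    (h : algebraMap F (K F) a + algebraMap F (K F) b * im = 0) : a = 0 ∧ b = 0 := by
  haveI : Fact (Irreducible (X ^ 2 + 1 : F[X])) := ⟨irr_q hns⟩
  have hinj : Function.Injective (algebraMap F (K F)) := (algebraMap F (K F)).injective
  by_cases hb : b = 0
  · subst hb
    simp only [map_zero, zero_mul, add_zero] at h
    exact ⟨hinj (by simpa using h), rfl⟩
  · exfalso
    have hK : a ^ 2 + b ^ 2 = 0 := by
      apply hinj
      rw [map_add, map_pow, map_pow, map_zero]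
      linear_combination (algebraMap F (K F) a - algebraMap F (K F) b * im) * h
        + (algebraMap F (K F) b) ^ 2 * (im_sq (F := F))
    apply hns (a / b)
    field_simp
    linear_combination hK

theorem exists_parts (w : (K F)[X]) : ∃ x y : F[X], w = ph x + C im * ph y := by
  induction w using Polynomial.induction_on' with
  | add p q hp hq =>
    obtain ⟨x1, y1, h1⟩ := hp
    obtain ⟨x2, y2, h2⟩ := hq
    exact ⟨x1 + x2, y1 + y2, by rw [h1, h2, ph_add, ph_add]; ring⟩
  | monomial n k =>
    obtain ⟨a, b, hk⟩ := exists_re_im k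
    refine ⟨monomial n a, monomial n b, ?_⟩
    simp only [ph, Polynomial.map_monomial, hk]
    rw [C_mul_monomial, ← map_add (monomial n)]
    ring_nf

theorem parts_eq_zero (hns : ∀ a : F, a ^ 2 ≠ -1) {x y : F[X]}
    (h : ph x + C im * ph y = 0) : x = 0 ∧ y = 0 := by
  have key : ∀ n, x.coeff n = 0 ∧ y.coeff n = 0 := by
    intro n
    apply re_im_eq_zero hns
    have := congrArg (fun p => p.coeff n) h
    simpa [ph, coeff_map, coeff_C_mul, mul_comm] using this
  exact ⟨Polynomial.ext fun n => (key n).1, Polynomial.ext fun n => (key n).2⟩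

theorem parts_unique (hns : ∀ a : F, a ^ 2 ≠ -1) {x y x' y' : F[X]}
    (h : ph x + C im * ph y = ph x' + C im * ph y') : x = x' ∧ y = y' := by
  have h0 : ph (x - x') + C im * ph (y - y') = 0 := by
    rw [ph_sub, ph_sub]
    linear_combination h
  obtain ⟨h1, h2⟩ := parts_eq_zero hns h0
  exact ⟨sub_eq_zero.mp h1, sub_eq_zero.mp h2⟩

theorem ph_dvd_down (hns : ∀ a : F, a ^ 2 ≠ -1) {g z : F[X]} (h : ph g ∣ ph z) : g ∣ z := by
  obtain ⟨w, hw⟩ := h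
  obtain ⟨q, r, rfl⟩ := exists_parts w
  have h2 : ph z + C im * ph 0 = ph (g * q) + C im * ph (g * r) := by
    rw [ph_zero, ph_mul, ph_mul, hw]; ring
  exact (parts_unique hns h2).1 ▸ Dvd.intro q rfl

theorem Cim_sq : (C im : (K F)[X]) ^ 2 = -1 := by
  rw [← C_pow, im_sq, map_neg, map_one]

theorem norm_eq (x y : F[X]) :
    (ph x + C im * ph y) * (ph x - C im * ph y) = ph (x ^ 2 + y ^ 2) := by
  rw [ph_add, ph_pow, ph_pow]
  linear_combination (-(ph y)^2) * (Cim_sq (F := F))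


/-- conjugation on K[X] -/
noncomputable def cP (w : (K F)[X]) : (K F)[X] := w.map (conj (F := F)).toRingHom

theorem cP_mul (v w : (K F)[X]) : cP (v * w) = cP v * cP w := Polynomial.map_mul _
theorem cP_dvd {v w : (K F)[X]} (h : v ∣ w) : cP v ∣ cP w := Polynomial.map_dvd _ h

theorem cP_ph (x : F[X]) : cP (ph x) = ph x := by
  rw [cP, ph, Polynomial.map_map]
  congr 1
  exact RingHom.ext fun a => (conj (F := F)).commutes a

theorem cP_parts (x y : F[X]) : cP (ph x + C im * ph y) = ph x - C im * ph y := by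
  rw [cP, Polynomial.map_add, Polynomial.map_mul, map_C]
  rw [show ((conj (F := F)).toRingHom im) = -im from conj_im, map_neg]
  rw [← cP, ← cP, cP_ph, cP_ph]
  ring

theorem cP_cP (w : (K F)[X]) : cP (cP w) = w := by
  rw [cP, cP, Polynomial.map_map]
  have h : ((conj (F := F)).toRingHom).comp (conj (F := F)).toRingHom = RingHom.id _ :=
    RingHom.ext conj_conj
  rw [h, Polynomial.map_id]

noncomputable def conjE : K F ≃+* K F :=
  RingEquiv.ofRingHom (conj (F := F)).toRingHom (conj (F := F)).toRingHom
    (RingHom.ext conj_conj) (RingHom.ext conj_conj)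

theorem cP_prime {q : (K F)[X]} (hns : ∀ a : F, a ^ 2 ≠ -1) (hq : Prime q) : Prime (cP q) := by
  haveI : Fact (Irreducible (X ^ 2 + 1 : F[X])) := ⟨irr_q hns⟩
  have h := (MulEquiv.prime_iff (Polynomial.mapEquiv (conjE (F := F))).toMulEquiv).mpr hq
  have hco : ((conjE (F := F) : K F ≃+* K F) : K F →+* K F) = (conj (F := F)).toRingHom := rfl
  simpa [Polynomial.mapEquiv_apply, cP, hco] using h

theorem ph_neg (x : F[X]) : ph (-x) = -ph x := Polynomial.map_neg _

theorem cP_parts' (x y : F[X]) : cP (ph x - C im * ph y) = ph x + C im * ph y := by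
  have h := cP_parts x (-y)
  rw [ph_neg] at h
  rw [show ph x + C im * -ph y = ph x - C im * ph y from by ring] at h
  rw [h]
  ring

/-- any common divisor of A and conj A divides ph z and ph t -/
theorem dvd_ph_of_dvd_both (hns : ∀ a : F, a ^ 2 ≠ -1) {z t : F[X]} {w : (K F)[X]}
    (h1 : w ∣ ph z + C im * ph t) (h2 : w ∣ ph z - C im * ph t) :
    w ∣ ph z ∧ w ∣ ph t := by
  haveI : Fact (Irreducible (X ^ 2 + 1 : F[X])) := ⟨irr_q hns⟩
  have h2F : (2 : F) ≠ 0 := two_ne_zero'' hns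
  have h2K : (2 : K F) ≠ 0 := by
    intro h0
    apply h2F
    apply (algebraMap F (K F)).injective
    rw [map_ofNat, map_zero, h0]
  have h2u : IsUnit ((2 : (K F)[X])) := by
    rw [← map_ofNat (C : (K F) →+* (K F)[X]) 2]
    exact isUnit_C.mpr (isUnit_iff_ne_zero.mpr h2K)
  constructor
  · have hsum : ph z + C im * ph t + (ph z - C im * ph t) = 2 * ph z := by ring
    have hd : w ∣ 2 * ph z := hsum ▸ dvd_add h1 h2
    obtain ⟨v, hv⟩ := h2u.exists_right_inv
    have : ph z = (2 * ph z) * v := by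
      rw [mul_comm (2 : (K F)[X]) (ph z), mul_assoc, hv, mul_one]
    exact this ▸ hd.mul_right v
  · have him0 : (im : K F) ≠ 0 := by
      intro h0
      have hh := im_sq (F := F)
      rw [h0] at hh
      exact one_ne_zero (α := K F) (by linear_combination hh)
    have hu : IsUnit ((2 : (K F)[X]) * C im) :=
      h2u.mul (isUnit_C.mpr (isUnit_iff_ne_zero.mpr him0))
    have hdiff : ph z + C im * ph t - (ph z - C im * ph t) = (2 * C im) * ph t := by ring
    have hd : w ∣ (2 * C im) * ph t := hdiff ▸ dvd_sub h1 h2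
    obtain ⟨v, hv⟩ := hu.exists_right_inv
    have : ph t = ((2 * C im) * ph t) * v := by
      rw [mul_comm (2 * C im) (ph t), mul_assoc, hv, mul_one]
    exact this ▸ hd.mul_right v

/-- common divisors of A and conj A are units -/
theorem unit_of_dvd_both (hns : ∀ a : F, a ^ 2 ≠ -1) {z t g : F[X]} (hzt : IsCoprime z t)
    (h1 : ph g ∣ ph z + C im * ph t) (h2 : ph g ∣ ph z - C im * ph t) : IsUnit g := by
  haveI : Fact (Irreducible (X ^ 2 + 1 : F[X])) := ⟨irr_q hns⟩
  have h2F : (2 : F) ≠ 0 := two_ne_zero'' hns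
  have hgz : g ∣ z := by
    apply ph_dvd_down hns
    have hsum : ph z + C im * ph t + (ph z - C im * ph t) = ph (2 * z) := by
      rw [ph_mul, show (ph (2 : F[X]) : (K F)[X]) = 2 from by simp [ph]]; ring
    have hd : ph g ∣ ph (2 * z) := hsum ▸ dvd_add h1 h2
    have h2z : ph (2 * z) ∣ ph z := ph_dvd ⟨C (2 : F)⁻¹, by
      rw [← map_ofNat (C : F →+* F[X]) 2]
      rw [show (C (2:F)) * z * C ((2:F)⁻¹) = C ((2:F) * (2:F)⁻¹) * z from by
        rw [C_mul]; ring]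
      rw [mul_inv_cancel₀ h2F]
      simp⟩
    exact hd.trans h2z
  have hgt : g ∣ t := by
    apply ph_dvd_down hns
    have hdiff : ph z + C im * ph t - (ph z - C im * ph t) = (2 * C im) * ph t := by ring
    have hd : ph g ∣ (2 * C im) * ph t := hdiff ▸ dvd_sub h1 h2
    have h2K : (2 : K F) ≠ 0 := by
      intro h0
      apply h2F
      apply (algebraMap F (K F)).injective
      rw [map_ofNat, map_zero, h0]
    have him0 : (im : K F) ≠ 0 := by
      intro h0
      have h1 := im_sq (F := F)
      rw [h0] at h1
      exact one_ne_zero (α := K F) (by linear_combination h1)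
    have hu : IsUnit ((2 : (K F)[X]) * C im) := by
      apply IsUnit.mul
      · rw [← map_ofNat (C : (K F) →+* (K F)[X]) 2]
        exact isUnit_C.mpr (isUnit_iff_ne_zero.mpr h2K)
      · exact isUnit_C.mpr (isUnit_iff_ne_zero.mpr him0)
    obtain ⟨v, hv⟩ := hu.exists_right_inv
    have : ph t = ((2 * C im) * ph t) * v := by
      rw [mul_comm (2 * C im) (ph t), mul_assoc, hv, mul_one]
    exact this ▸ hd.mul_right v
  exact hzt.isUnit_of_dvd' hgz hgt

theorem coprime_of_parts_dvd (hns : ∀ a : F, a ^ 2 ≠ -1) {z t z' t' : F[X]}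
    (hzt : IsCoprime z t) (h : (ph z' + C im * ph t') ∣ (ph z + C im * ph t)) :
    IsCoprime z' t' := by
  apply isCoprime_of_irreducible_dvd
  · rintro ⟨rfl, rfl⟩
    have h0 : (0 : (K F)[X]) ∣ ph z + C im * ph t := by simpa [ph_zero] using h
    obtain ⟨hz0, ht0⟩ := parts_eq_zero hns (zero_dvd_iff.mp h0)
    exact not_isCoprime_zero_zero (hz0 ▸ ht0 ▸ hzt)
  · intro w hw hwz hwt
    have h1 : ph w ∣ ph z + C im * ph t :=
      dvd_trans (dvd_add (ph_dvd hwz) ((ph_dvd hwt).mul_left (C im))) h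
    have h2 : ph w ∣ ph z - C im * ph t := by
      have hc := cP_dvd h1
      rwa [cP_ph, cP_parts] at hc
    exact hw.not_isUnit (unit_of_dvd_both hns hzt h1 h2)


theorem sq_add_sq_ne_zero (hns : ∀ a : F, a ^ 2 ≠ -1) {z t : F[X]}
    (hzt : IsCoprime z t) : z ^ 2 + t ^ 2 ≠ 0 := by
  intro h
  have hc2 : IsCoprime (z ^ 2) (t ^ 2) := hzt.pow
  have hut : IsUnit (t ^ 2) := hc2.isUnit_of_dvd' ⟨-1, by linear_combination h⟩ dvd_rfl
  have huz : IsUnit (z ^ 2) := hc2.isUnit_of_dvd' dvd_rfl ⟨-1, by linear_combination h⟩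
  have ht : IsUnit t := by rw [sq] at hut; exact isUnit_of_mul_isUnit_left hut
  have hz : IsUnit z := by rw [sq] at huz; exact isUnit_of_mul_isUnit_left huz
  obtain ⟨a, _, haz⟩ := Polynomial.isUnit_iff.mp hz
  obtain ⟨b, hb, hbt⟩ := Polynomial.isUnit_iff.mp ht
  have hb0 : b ≠ 0 := hb.ne_zero
  have hab : a ^ 2 + b ^ 2 = 0 := by
    have hC : C (a ^ 2 + b ^ 2) = (0 : F[X]) := by
      rw [map_add, map_pow, map_pow, haz, hbt, h]
    exact (C_eq_zero).mp hC
  apply hns (a / b)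
  field_simp
  linear_combination hab

theorem key (hns : ∀ a : F, a ^ 2 ≠ -1) (n : ℕ) :
    ∀ m z t : F[X], m.natDegree ≤ n → IsCoprime z t → m ∣ z ^ 2 + t ^ 2 →
    ∃ x y u : F[X], IsCoprime x y ∧ IsUnit u ∧ m = (x ^ 2 + y ^ 2) * u ∧
      (ph x + C im * ph y) ∣ (ph z + C im * ph t) := by
  haveI : Fact (Irreducible (X ^ 2 + 1 : F[X])) := ⟨irr_q hns⟩
  induction n with
  | zero =>
    intro m z t hdeg hzt hdvd
    have hm0 : m ≠ 0 := by
      rintro rfl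
      exact sq_add_sq_ne_zero hns hzt (zero_dvd_iff.mp hdvd)
    have hm : IsUnit m := by
      rw [Nat.le_zero] at hdeg
      rw [eq_C_of_natDegree_eq_zero hdeg]
      refine isUnit_C.mpr (isUnit_iff_ne_zero.mpr ?_)
      intro h0
      exact hm0 (by rw [eq_C_of_natDegree_eq_zero hdeg, h0, map_zero])
    exact ⟨1, 0, m, isCoprime_one_left, hm, by ring, by simp [ph_one, ph_zero]⟩
  | succ n ih =>
    intro m z t hdeg hzt hdvd
    by_cases hm : IsUnit m
    · exact ⟨1, 0, m, isCoprime_one_left, hm, by ring, by simp [ph_one, ph_zero]⟩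
    have hm0 : m ≠ 0 := by
      rintro rfl
      exact sq_add_sq_ne_zero hns hzt (zero_dvd_iff.mp hdvd)
    obtain ⟨p, hp_irr, m₁, hm₁⟩ := WfDvdMonoid.exists_irreducible_factor hm hm0
    have hp0 : p ≠ 0 := fun h0 => hm0 (by rw [hm₁, h0, zero_mul])
    have hm10 : m₁ ≠ 0 := fun h0 => hm0 (by rw [hm₁, h0, mul_zero])
    have hA : ph p ∣ (ph z + C im * ph t) * (ph z - C im * ph t) := by
      rw [norm_eq]
      exact ph_dvd (dvd_trans ⟨m₁, hm₁⟩ hdvd)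
    have hΦp0 : ph p ≠ 0 := by
      rw [ph, Ne, Polynomial.map_eq_zero]
      exact hp0
    have hΦpu : ¬IsUnit (ph p) := by
      intro hu
      have hd := natDegree_eq_zero_of_isUnit hu
      rw [ph, natDegree_map_eq_of_injective (algebraMap F (K F)).injective] at hd
      have := hp_irr.natDegree_pos
      omega
    obtain ⟨q₀, hq0_irr, hq0_dvd⟩ := WfDvdMonoid.exists_irreducible_factor hΦpu hΦp0
    have hq0_prime : Prime q₀ := hq0_irr.prime
    -- main inner argument, for a prime divisor of ph p dividing A
    have main : ∀ q : (K F)[X], Prime q → q ∣ ph p → q ∣ (ph z + C im * ph t) →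
        ∃ x y u : F[X], IsCoprime x y ∧ IsUnit u ∧ m = (x ^ 2 + y ^ 2) * u ∧
          (ph x + C im * ph y) ∣ (ph z + C im * ph t) := by
      intro q hq hqp hqA
      obtain ⟨x₀, y₀, hq0⟩ := exists_parts q
      have hqbar : cP q = ph x₀ - C im * ph y₀ := by rw [hq0, cP_parts]
      have hqb_prime : Prime (ph x₀ - C im * ph y₀) := hqbar ▸ cP_prime hns hq
      have hqbp : (ph x₀ - C im * ph y₀) ∣ ph p := by
        have hc := cP_dvd hqp
        rwa [hqbar, cP_ph] at hc
      have hqbA : (ph x₀ - C im * ph y₀) ∣ ph z - C im * ph t := by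
        have hc := cP_dvd hqA
        rwa [hqbar, cP_parts] at hc
      have hndvd : ¬ q ∣ (ph x₀ - C im * ph y₀) := by
        intro hdd
        obtain ⟨hz', ht'⟩ := dvd_ph_of_dvd_both hns hqA (hdd.trans hqbA)
        exact hq.not_isUnit ((hzt.map (mapRingHom (algebraMap F (K F)))).isUnit_of_dvd'
          (by simpa [coe_mapRingHom, ph] using hz') (by simpa [coe_mapRingHom, ph] using ht'))
      have hcop : IsCoprime q (ph x₀ - C im * ph y₀) :=
        (hq.coprime_iff_not_dvd).mpr hndvd
      have hqqb : q * (ph x₀ - C im * ph y₀) ∣ ph p := hcop.mul_dvd hqp hqbp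
      have hsp : x₀ ^ 2 + y₀ ^ 2 ∣ p := by
        apply ph_dvd_down hns
        rw [← norm_eq]
        rw [← hq0]
        exact hqqb
      obtain ⟨d, hd⟩ := hsp
      have hsu : ¬IsUnit (x₀ ^ 2 + y₀ ^ 2) := by
        intro hu
        obtain ⟨c, hc, hcs⟩ := Polynomial.isUnit_iff.mp hu
        have : IsUnit (ph (x₀ ^ 2 + y₀ ^ 2)) := by
          rw [← hcs, ph, Polynomial.map_C]
          refine isUnit_C.mpr (isUnit_iff_ne_zero.mpr ?_)
          intro h0
          exact hc.ne_zero ((algebraMap F (K F)).injective (by rw [h0, map_zero]))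
        rw [← norm_eq, ← hq0] at this
        exact hq.not_isUnit (isUnit_of_mul_isUnit_left this)
      have hdu : IsUnit d := (hp_irr.isUnit_or_isUnit hd).resolve_left hsu
      obtain ⟨B, hB⟩ := hqA
      obtain ⟨z₁, t₁, hB1⟩ := exists_parts B
      have hAbar : ph z - C im * ph t =
          (ph x₀ - C im * ph y₀) * (ph z₁ - C im * ph t₁) := by
        have hc := congrArg cP hB
        rwa [cP_parts, cP_mul, hqbar, hB1, cP_parts] at hc
      have hprod : z ^ 2 + t ^ 2 = (x₀ ^ 2 + y₀ ^ 2) * (z₁ ^ 2 + t₁ ^ 2) := by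
        apply Polynomial.map_injective (algebraMap F (K F)) (algebraMap F (K F)).injective
        show ph _ = ph _
        rw [← norm_eq z t, hB, hB1, hAbar, ph_mul, ← norm_eq z₁ t₁, ← norm_eq x₀ y₀, ← hq0]
        have hq0' : q = ph x₀ + C im * ph y₀ := hq0
        rw [hq0']
        ring
      have hcop1 : IsCoprime z₁ t₁ := by
        apply coprime_of_parts_dvd hns hzt (z' := z₁) (t' := t₁)
        rw [hB, ← hB1]
        exact dvd_mul_left B q
      have hm1dvd : m₁ ∣ z₁ ^ 2 + t₁ ^ 2 := by
        have h1 : (x₀ ^ 2 + y₀ ^ 2) * (d * m₁) ∣ (x₀ ^ 2 + y₀ ^ 2) * (z₁ ^ 2 + t₁ ^ 2) := by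
          rw [← mul_assoc, ← hd, ← hm₁, ← hprod]
          exact hdvd
        have hs0 : (x₀ ^ 2 + y₀ ^ 2) ≠ 0 := fun h0 => hp0 (by rw [hd, h0, zero_mul])
        have h2 := (mul_dvd_mul_iff_left hs0).mp h1
        exact (dvd_mul_left m₁ d).trans h2
      have hdeg1 : m₁.natDegree ≤ n := by
        have hmm : m.natDegree = p.natDegree + m₁.natDegree := by
          rw [hm₁]; exact natDegree_mul hp0 hm10
        have hpd := hp_irr.natDegree_pos
        omega
      obtain ⟨x₁, y₁, u₁, hcopr₁, hu₁, hm₁eq, hγ₁⟩ := ih m₁ z₁ t₁ hdeg1 hcop1 hm1dvd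
      have hγ_eq : ph (x₀ * x₁ - y₀ * y₁) + C im * ph (x₀ * y₁ + y₀ * x₁)
          = q * (ph x₁ + C im * ph y₁) := by
        rw [hq0, ph_sub, ph_add, ph_mul, ph_mul, ph_mul, ph_mul]
        linear_combination (-(ph y₀ * ph y₁)) * (Cim_sq (F := F))
      have hγA : (ph (x₀ * x₁ - y₀ * y₁) + C im * ph (x₀ * y₁ + y₀ * x₁))
          ∣ (ph z + C im * ph t) := by
        rw [hγ_eq, hB, hB1]
        exact mul_dvd_mul_left q (hB1 ▸ hγ₁)
      refine ⟨x₀ * x₁ - y₀ * y₁, x₀ * y₁ + y₀ * x₁, d * u₁,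
        coprime_of_parts_dvd hns hzt hγA, hdu.mul hu₁, ?_, hγA⟩
      rw [hm₁, hd, hm₁eq]
      have hbr : (x₀ * x₁ - y₀ * y₁) ^ 2 + (x₀ * y₁ + y₀ * x₁) ^ 2
          = (x₀ ^ 2 + y₀ ^ 2) * (x₁ ^ 2 + y₁ ^ 2) := by ring
      rw [hbr]
      ring
    rcases hq0_prime.2.2 _ _ (hq0_dvd.trans hA) with h | h
    · exact main q₀ hq0_prime hq0_dvd h
    · refine main (cP q₀) (cP_prime hns hq0_prime) ?_ ?_
      · have hc := cP_dvd hq0_dvd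
        rwa [cP_ph] at hc
      · have hc := cP_dvd h
        rwa [cP_parts'] at hc

end AssocSqAux

/-- Let `F` be a field of characteristic different from 2 in which `−1` is not a square.
If `m ∈ F[X]` divides `z² + t²` for some coprime `z, t ∈ F[X]`, then `m` is an associate
of `x² + y²` for some coprime `x, y ∈ F[X]`. -/
theorem associate_sq_add_sq_of_dvd {F : Type*} [Field F]
    (hchar : ringChar F ≠ 2) (hns : ∀ a : F, a ^ 2 ≠ -1)
    (m z t : Polynomial F) (hzt : IsCoprime z t) (hdvd : m ∣ z ^ 2 + t ^ 2) :
    ∃ x y u : Polynomial F, IsCoprime x y ∧ IsUnit u ∧ m = (x ^ 2 + y ^ 2) * u := by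
  obtain ⟨x, y, u, hxy, hu, heq, -⟩ :=
    AssocSqAux.key hns m.natDegree m z t le_rfl hzt hdvd
  exact ⟨x, y, u, hxy, hu, heq⟩
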